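/- Let $y_1, y_2 > 0$ with $y_2 > 1$, $h = \sqrt{y_1+y_2-y_1y_2} > 0$, so $y_2 > h$. For $1 < r_1 < r_2$ define $g_{r}(\xi) = \frac{(\xi+\frac{1}{hr})(\xi+\frac{h}{r})}{(\xi+\frac{y_2}{hr})(\xi+\frac{h}{y_2 r})}$. Then $\lim_{r_2\downarrow 1}\lim_{r_1\downarrow 1}\, -\frac{1}{2\pi^2}\oint_{|\xi_2|=1}\oint_{|\xi_1|=1} g_{r_1}(\xi_1)\, g_{r_2}(\xi_2)\, \frac{r_1 r_2}{(r_1\xi_1 - r_2\xi_2)^2}\, d\xi_1\, d\xi_2 = \frac{2 h^2 y_1^2 y_2^2}{(y_1+y_2)^4}$. -/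

import Mathlib

open Real Complex Filter Topology Metric Set

private lemma add_ne_of_norm_lt {a b : ℂ} (h : ‖a‖ < ‖b‖) : a + b ≠ 0 := by
  intro h0
  rw [eq_neg_of_add_eq_zero_right h0, norm_neg] at h
  exact lt_irrefl _ h

private lemma add_ne_of_norm_lt' {a b : ℂ} (h : ‖b‖ < ‖a‖) : a + b ≠ 0 := by
  rw [add_comm]; exact add_ne_of_norm_lt h

private lemma sub_ne_of_norm_lt {a b : ℂ} (h : ‖a‖ < ‖b‖) : a - b ≠ 0 := by
  intro h0
  rw [sub_eq_zero.mp h0] at h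
  exact lt_irrefl _ h

private lemma sub_ne_of_norm_lt' {a b : ℂ} (h : ‖b‖ < ‖a‖) : a - b ≠ 0 := by
  intro h0
  rw [sub_eq_zero.mp h0] at h
  exact lt_irrefl _ h

private lemma circleIntegral_add' {f g : ℂ → ℂ} {c : ℂ} {R : ℝ}
    (hf : CircleIntegrable f c R) (hg : CircleIntegrable g c R) :
    (∮ z in C(c, R), (f z + g z)) = (∮ z in C(c, R), f z) + ∮ z in C(c, R), g z := by
  simp only [circleIntegral, smul_add]
  exact intervalIntegral.integral_add hf.out hg.out

set_option maxHeartbeats 2000000 in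
private lemma core12 (y2 h r1 r2 : ℝ) (hh : 0 < h) (hy2 : 1 < y2) (hhy2 : h < y2)
    (hr1 : 1 < r1) (hr12 : r1 < r2) (hr2y : r2 * h < y2) :
    ((-(1 / (2 * (π : ℂ) ^ 2))) *
        ∮ ξ2 in C(0, 1),
          (∮ ξ1 in C(0, 1),
            ((ξ1 + 1 / ((h : ℂ) * r1)) * (ξ1 + (h : ℂ) / r1)) /
                ((ξ1 + (y2 : ℂ) / ((h : ℂ) * r1)) * (ξ1 + (h : ℂ) / ((y2 : ℂ) * r1))) *
              (((ξ2 + 1 / ((h : ℂ) * r2)) * (ξ2 + (h : ℂ) / r2)) /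
                ((ξ2 + (y2 : ℂ) / ((h : ℂ) * r2)) * (ξ2 + (h : ℂ) / ((y2 : ℂ) * r2)))) *
              ((r1 : ℂ) * (r2 : ℂ) / ((r1 : ℂ) * ξ1 - (r2 : ℂ) * ξ2) ^ 2)))
    = 2 * ((h : ℂ) ^ 2 * ((y2 : ℂ) - (h : ℂ) ^ 2) * ((y2 : ℂ) - 1) *
        (((y2 : ℂ) ^ 2 - (h : ℂ) ^ 2) ^ 2 -
            ((y2 : ℂ) + (h : ℂ) ^ 2 * (y2 : ℂ) - 2 * (h : ℂ) ^ 2) * ((y2 : ℂ) ^ 2 - (h : ℂ) ^ 2) +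
          (h : ℂ) ^ 2 * ((y2 : ℂ) - (h : ℂ) ^ 2) * ((y2 : ℂ) - 1)) /
        (((y2 : ℂ) ^ 2 - (h : ℂ) ^ 2) ^ 4)) := by
  -- abbreviations
  set hc : ℂ := (h : ℂ) with hhc
  set yc : ℂ := (y2 : ℂ) with hyc
  set R1 : ℂ := (r1 : ℂ) with hR1
  set R2 : ℂ := (r2 : ℂ) with hR2
  -- real facts
  have h0y2 : (0:ℝ) < y2 := lt_trans one_pos hy2
  have h0r1 : (0:ℝ) < r1 := lt_trans one_pos hr1
  have h0r2 : (0:ℝ) < r2 := lt_trans h0r1 hr12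
  have hr1y : r1 * h < y2 := lt_trans (by nlinarith) hr2y
  -- complex nonzero facts
  have hc0 : hc ≠ 0 := Complex.ofReal_ne_zero.2 hh.ne'
  have yc0 : yc ≠ 0 := Complex.ofReal_ne_zero.2 h0y2.ne'
  have R10 : R1 ≠ 0 := Complex.ofReal_ne_zero.2 h0r1.ne'
  have R20 : R2 ≠ 0 := Complex.ofReal_ne_zero.2 h0r2.ne'
  have hd5 : yc ^ 2 - hc ^ 2 ≠ 0 := by
    have : ((y2 ^ 2 - h ^ 2 : ℝ) : ℂ) ≠ 0 := Complex.ofReal_ne_zero.2 (by nlinarith)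
    push_cast at this
    exact this
  -- coefficients
  set Pc : ℂ := (yc ^ 2 - hc ^ 2) ^ 2 - (yc + hc ^ 2 * yc - 2 * hc ^ 2) * (yc ^ 2 - hc ^ 2) +
      hc ^ 2 * (yc - hc ^ 2) * (yc - 1) with hPc
  set A0c : ℂ := hc ^ 2 * (yc - hc ^ 2) * (yc - 1) * Pc / ((yc ^ 2 - hc ^ 2) ^ 4) with hA0c
  set B0c : ℂ := hc * (yc - hc ^ 2) * (yc - 1) *
      ((yc + hc ^ 2 * yc - 2 * hc ^ 2) * (yc ^ 2 - hc ^ 2) - hc ^ 2 * (yc - hc ^ 2) * (yc - 1)) /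
      (yc * (yc ^ 2 - hc ^ 2) ^ 3 * R2) with hB0c
  set C0c : ℂ := hc ^ 2 * (yc - hc ^ 2) ^ 2 * (yc - 1) ^ 2 /
      (yc ^ 2 * (yc ^ 2 - hc ^ 2) ^ 2 * R2 ^ 2) with hC0c
  set D0c : ℂ := -(hc ^ 2 * yc ^ 2 * (yc - hc ^ 2) ^ 2 * (yc - 1) ^ 2) /
      ((yc ^ 2 - hc ^ 2) ^ 4) with hD0c
  set Kf : ℂ → ℂ := fun ξ => hc * (yc - hc ^ 2) * (yc - 1) * yc ^ 2 * R2 *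
      ((hc * R2 * ξ + 1) * (R2 * ξ + hc)) /
      ((yc ^ 2 - hc ^ 2) * ((hc * R2 * ξ + yc) * (yc * R2 * ξ + hc) ^ 3)) with hKf
  -- the inner integral
  have inner_eq : ∀ ξ2 ∈ sphere (0:ℂ) 1,
      (∮ ξ1 in C(0, 1),
        ((ξ1 + 1 / (hc * R1)) * (ξ1 + hc / R1)) /
            ((ξ1 + yc / (hc * R1)) * (ξ1 + hc / (yc * R1))) *
          (((ξ2 + 1 / (hc * R2)) * (ξ2 + hc / R2)) /
            ((ξ2 + yc / (hc * R2)) * (ξ2 + hc / (yc * R2)))) *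
          (R1 * R2 / (R1 * ξ1 - R2 * ξ2) ^ 2))
      = (2 * (π:ℂ) * Complex.I) * Kf ξ2 := by
    intro ξ2 hξ2
    have hξ2n : ‖ξ2‖ = 1 := mem_sphere_zero_iff_norm.mp hξ2
    have hnhc : ‖hc‖ = h := by
      rw [hhc]; simp [Complex.norm_real, Real.norm_eq_abs, abs_of_pos hh]
    have hnR1 : ‖R1‖ = r1 := by
      rw [hR1]; simp [Complex.norm_real, Real.norm_eq_abs, abs_of_pos h0r1]
    have hnR2 : ‖R2‖ = r2 := by
      rw [hR2]; simp [Complex.norm_real, Real.norm_eq_abs, abs_of_pos h0r2]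
    have hnyc : ‖yc‖ = y2 := by
      rw [hyc]; simp [Complex.norm_real, Real.norm_eq_abs, abs_of_pos h0y2]
    have hb1cast : yc / (hc * R1) = ((y2 / (h * r1) : ℝ) : ℂ) := by
      rw [hhc, hyc, hR1]; push_cast; ring
    have hw1cast : hc / (yc * R1) = ((h / (y2 * r1) : ℝ) : ℂ) := by
      rw [hhc, hyc, hR1]; push_cast; ring
    have hb1gt : 1 < ‖yc / (hc * R1)‖ := by
      rw [hb1cast]
      simp only [Complex.norm_real, Real.norm_eq_abs]
      rw [abs_of_pos (by positivity), lt_div_iff₀ (by positivity)]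
      nlinarith
    have hw1lt : ‖hc / (yc * R1)‖ < 1 := by
      rw [hw1cast]
      simp only [Complex.norm_real, Real.norm_eq_abs]
      rw [abs_of_pos (by positivity), div_lt_one (by positivity)]
      nlinarith
    have hPa : yc * R2 * ξ2 + hc ≠ 0 := by
      apply add_ne_of_norm_lt'
      rw [norm_mul, norm_mul, hnyc, hnR2, hξ2n, hnhc]
      nlinarith
    have hPb : hc * R2 * ξ2 + yc ≠ 0 := by
      apply add_ne_of_norm_lt
      rw [norm_mul, norm_mul, hnyc, hnR2, hξ2n, hnhc]
      nlinarith
    set G2 : ℂ := ((ξ2 + 1 / (hc * R2)) * (ξ2 + hc / R2)) /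
        ((ξ2 + yc / (hc * R2)) * (ξ2 + hc / (yc * R2))) with hG2
    set φ : ℂ → ℂ := fun ξ => (ξ + 1 / (hc * R1)) * (ξ + hc / R1) / (ξ + yc / (hc * R1)) * G2 *
        (R1 * R2 / (R1 * ξ - R2 * ξ2) ^ 2) with hφ
    have funeq : (fun ξ1 : ℂ =>
        ((ξ1 + 1 / (hc * R1)) * (ξ1 + hc / R1)) /
            ((ξ1 + yc / (hc * R1)) * (ξ1 + hc / (yc * R1))) *
          (((ξ2 + 1 / (hc * R2)) * (ξ2 + hc / R2)) /
            ((ξ2 + yc / (hc * R2)) * (ξ2 + hc / (yc * R2)))) *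
          (R1 * R2 / (R1 * ξ1 - R2 * ξ2) ^ 2))
        = fun ξ1 => (ξ1 - (-(hc / (yc * R1))))⁻¹ • φ ξ1 := by
      funext ξ1
      simp only [hφ, hG2, smul_eq_mul, sub_neg_eq_add, div_eq_mul_inv, mul_inv]
      ring
    have hdiff : DifferentiableOn ℂ φ (closedBall (0:ℂ) 1) := by
      apply DifferentiableOn.mul
      apply DifferentiableOn.mul
      · apply DifferentiableOn.div
        · exact (differentiableOn_id.add_const _).mul (differentiableOn_id.add_const _)
        · exact differentiableOn_id.add_const _
        · intro ξ hξ
          exact add_ne_of_norm_lt (lt_of_le_of_lt (mem_closedBall_zero_iff.mp hξ) hb1gt)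
      · exact differentiableOn_const _
      · apply DifferentiableOn.div (differentiableOn_const _)
        · exact ((differentiableOn_id.const_mul _).sub (differentiableOn_const _)).pow _
        · intro ξ hξ
          apply pow_ne_zero
          apply sub_ne_of_norm_lt
          rw [norm_mul, norm_mul, hnR1, hnR2, hξ2n, mul_one]
          have h1 : r1 * ‖ξ‖ ≤ r1 * 1 :=
            mul_le_mul_of_nonneg_left (mem_closedBall_zero_iff.mp hξ) h0r1.le
          linarith
    have hDCC : DiffContOnCl ℂ φ (ball (0:ℂ) 1) :=
      DifferentiableOn.diffContOnCl (by rwa [closure_ball (0:ℂ) one_ne_zero])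
    have hw1mem : -(hc / (yc * R1)) ∈ ball (0:ℂ) 1 := by
      rw [mem_ball_zero_iff, norm_neg]; exact hw1lt
    rw [funeq, hDCC.circleIntegral_sub_inv_smul hw1mem, smul_eq_mul]
    congr 1
    -- φ (w1) = Kf ξ2
    simp only [hφ, hG2, hKf]
    have F1 : (-(hc / (yc * R1)) + 1 / (hc * R1)) * (-(hc / (yc * R1)) + hc / R1) /
        (-(hc / (yc * R1)) + yc / (hc * R1))
        = (yc - hc ^ 2) * (hc * (yc - 1)) / ((yc ^ 2 - hc ^ 2) * yc * R1) := by
      rw [show -(hc / (yc * R1)) + 1 / (hc * R1) = (yc - hc ^ 2) / (hc * yc * R1) by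
            field_simp; ring,
          show -(hc / (yc * R1)) + hc / R1 = hc * (yc - 1) / (yc * R1) by field_simp; ring,
          show -(hc / (yc * R1)) + yc / (hc * R1) = (yc ^ 2 - hc ^ 2) / (hc * yc * R1) by
            field_simp; ring,
          div_mul_div_comm, div_div_div_eq]
      rw [div_eq_div_iff (by apply_rules [pow_ne_zero, mul_ne_zero])
          (by apply_rules [pow_ne_zero, mul_ne_zero])]
      ring
    have F2 : ((ξ2 + 1 / (hc * R2)) * (ξ2 + hc / R2)) /
        ((ξ2 + yc / (hc * R2)) * (ξ2 + hc / (yc * R2)))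
        = yc * ((hc * R2 * ξ2 + 1) * (R2 * ξ2 + hc)) /
            ((hc * R2 * ξ2 + yc) * (yc * R2 * ξ2 + hc)) := by
      rw [show ξ2 + 1 / (hc * R2) = (hc * R2 * ξ2 + 1) / (hc * R2) by field_simp,
          show ξ2 + hc / R2 = (R2 * ξ2 + hc) / R2 by field_simp,
          show ξ2 + yc / (hc * R2) = (hc * R2 * ξ2 + yc) / (hc * R2) by field_simp,
          show ξ2 + hc / (yc * R2) = (yc * R2 * ξ2 + hc) / (yc * R2) by field_simp,
          div_mul_div_comm, div_mul_div_comm, div_div_div_eq]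
      rw [div_eq_div_iff (by apply_rules [pow_ne_zero, mul_ne_zero])
          (by apply_rules [pow_ne_zero, mul_ne_zero])]
      ring
    have F3 : R1 * R2 / (R1 * -(hc / (yc * R1)) - R2 * ξ2) ^ 2
        = R1 * R2 * yc ^ 2 / (yc * R2 * ξ2 + hc) ^ 2 := by
      rw [show R1 * -(hc / (yc * R1)) - R2 * ξ2 = -((yc * R2 * ξ2 + hc) / yc) by
            field_simp; ring, neg_pow, div_pow]
      rw [show (-1 : ℂ) ^ 2 * ((yc * R2 * ξ2 + hc) ^ 2 / yc ^ 2)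
            = (yc * R2 * ξ2 + hc) ^ 2 / yc ^ 2 by ring]
      rw [div_div_eq_mul_div]
    rw [F1, F2, F3, div_mul_div_comm, div_mul_div_comm]
    rw [div_eq_div_iff (by apply_rules [pow_ne_zero, mul_ne_zero])
        (by apply_rules [pow_ne_zero, mul_ne_zero])]
    ring
  -- outer poles
  set wa : ℂ := -(hc / (yc * R2)) with hwa
  set wb : ℂ := -(yc / (hc * R2)) with hwb
  have hnhc2 : ‖hc‖ = h := by
    rw [hhc]; simp [Complex.norm_real, Real.norm_eq_abs, abs_of_pos hh]
  have hnR22 : ‖R2‖ = r2 := by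
    rw [hR2]; simp [Complex.norm_real, Real.norm_eq_abs, abs_of_pos h0r2]
  have hnyc2 : ‖yc‖ = y2 := by
    rw [hyc]; simp [Complex.norm_real, Real.norm_eq_abs, abs_of_pos h0y2]
  have hwan : ‖wa‖ < 1 := by
    rw [hwa, norm_neg, show hc / (yc * R2) = ((h / (y2 * r2) : ℝ) : ℂ) by
      rw [hhc, hyc, hR2]; push_cast; ring]
    simp only [Complex.norm_real, Real.norm_eq_abs]
    rw [abs_of_pos (by positivity), div_lt_one (by positivity)]
    nlinarith
  have hwbn : 1 < ‖wb‖ := by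
    rw [hwb, norm_neg, show yc / (hc * R2) = ((y2 / (h * r2) : ℝ) : ℂ) by
      rw [hhc, hyc, hR2]; push_cast; ring]
    simp only [Complex.norm_real, Real.norm_eq_abs]
    rw [abs_of_pos (by positivity), lt_div_iff₀ (by positivity)]
    nlinarith
  -- partial fractions on the unit circle
  have pf : ∀ ξ ∈ sphere (0:ℂ) 1, Kf ξ =
      A0c * (ξ - wa)⁻¹ + D0c * (ξ - wb)⁻¹ +
        (B0c * ((ξ - wa) ^ 2)⁻¹ + C0c * ((ξ - wa) ^ 3)⁻¹) := by
    intro ξ hξ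
    have hξn : ‖ξ‖ = 1 := mem_sphere_zero_iff_norm.mp hξ
    have hPa : yc * R2 * ξ + hc ≠ 0 := by
      apply add_ne_of_norm_lt'
      rw [norm_mul, norm_mul, hnyc2, hnR22, hξn, hnhc2]
      nlinarith
    have hPb : hc * R2 * ξ + yc ≠ 0 := by
      apply add_ne_of_norm_lt
      rw [norm_mul, norm_mul, hnyc2, hnR22, hξn, hnhc2]
      nlinarith
    rw [hKf, hwa, hwb]
    simp only [sub_neg_eq_add]
    rw [show ξ + hc / (yc * R2) = (yc * R2 * ξ + hc) / (yc * R2) by field_simp,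
        show ξ + yc / (hc * R2) = (hc * R2 * ξ + yc) / (hc * R2) by field_simp,
        inv_div, div_pow, div_pow, inv_div, inv_div, inv_div]
    rw [show A0c * (yc * R2 / (yc * R2 * ξ + hc)) = A0c * (yc * R2) / (yc * R2 * ξ + hc) by
          ring,
        show D0c * (hc * R2 / (hc * R2 * ξ + yc)) = D0c * (hc * R2) / (hc * R2 * ξ + yc) by
          ring,
        show B0c * ((yc * R2) ^ 2 / (yc * R2 * ξ + hc) ^ 2)
          = B0c * (yc * R2) ^ 2 / (yc * R2 * ξ + hc) ^ 2 by ring,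
        show C0c * ((yc * R2) ^ 3 / (yc * R2 * ξ + hc) ^ 3)
          = C0c * (yc * R2) ^ 3 / (yc * R2 * ξ + hc) ^ 3 by ring]
    rw [hA0c, hB0c, hC0c, hD0c, hPc]
    rw [div_mul_eq_mul_div, div_div, div_mul_eq_mul_div, div_div,
        div_mul_eq_mul_div, div_div, div_mul_eq_mul_div, div_div]
    rw [div_add_div _ _ (by apply_rules [pow_ne_zero, mul_ne_zero])
          (by apply_rules [pow_ne_zero, mul_ne_zero]),
        div_add_div _ _ (by apply_rules [pow_ne_zero, mul_ne_zero])
          (by apply_rules [pow_ne_zero, mul_ne_zero]),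
        div_add_div _ _ (by apply_rules [pow_ne_zero, mul_ne_zero])
          (by apply_rules [pow_ne_zero, mul_ne_zero])]
    rw [div_eq_div_iff (by apply_rules [pow_ne_zero, mul_ne_zero])
        (by apply_rules [pow_ne_zero, mul_ne_zero])]
    ring
  -- integrate the partial fractions
  have hwamem : wa ∈ ball (0:ℂ) 1 := mem_ball_zero_iff.mpr hwan
  have i1 : CircleIntegrable (fun ξ : ℂ => A0c * (ξ - wa)⁻¹) 0 1 := by
    apply ContinuousOn.circleIntegrable zero_le_one
    exact continuousOn_const.mul ((continuousOn_id.sub continuousOn_const).inv₀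
      fun ξ hξ => sub_ne_of_norm_lt'
        (by simp only [id_eq, mem_sphere_zero_iff_norm.mp hξ]; exact hwan))
  have i2 : CircleIntegrable (fun ξ : ℂ => D0c * (ξ - wb)⁻¹) 0 1 := by
    apply ContinuousOn.circleIntegrable zero_le_one
    exact continuousOn_const.mul ((continuousOn_id.sub continuousOn_const).inv₀
      fun ξ hξ => sub_ne_of_norm_lt
        (by simp only [id_eq, mem_sphere_zero_iff_norm.mp hξ]; exact hwbn))
  have i3 : CircleIntegrable (fun ξ : ℂ => B0c * ((ξ - wa) ^ 2)⁻¹) 0 1 := by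
    apply ContinuousOn.circleIntegrable zero_le_one
    exact continuousOn_const.mul (((continuousOn_id.sub continuousOn_const).pow 2).inv₀
      fun ξ hξ => pow_ne_zero 2 (sub_ne_of_norm_lt'
        (by simp only [id_eq, mem_sphere_zero_iff_norm.mp hξ]; exact hwan)))
  have i4 : CircleIntegrable (fun ξ : ℂ => C0c * ((ξ - wa) ^ 3)⁻¹) 0 1 := by
    apply ContinuousOn.circleIntegrable zero_le_one
    exact continuousOn_const.mul (((continuousOn_id.sub continuousOn_const).pow 3).inv₀
      fun ξ hξ => pow_ne_zero 3 (sub_ne_of_norm_lt'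
        (by simp only [id_eq, mem_sphere_zero_iff_norm.mp hξ]; exact hwan)))
  have v1 : (∮ ξ in C(0,1), A0c * (ξ - wa)⁻¹) = A0c * (2 * (π:ℂ) * Complex.I) := by
    have hs := circleIntegral.integral_smul A0c (fun ξ : ℂ => (ξ - wa)⁻¹) 0 1
    simp only [smul_eq_mul] at hs
    rw [hs, circleIntegral.integral_sub_inv_of_mem_ball hwamem]
  have v2 : (∮ ξ in C(0,1), D0c * (ξ - wb)⁻¹) = 0 := by
    apply Complex.circleIntegral_eq_zero_of_differentiable_on_off_countable zero_le_one
      countable_empty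
    · exact continuousOn_const.mul ((continuousOn_id.sub continuousOn_const).inv₀
        fun ξ hξ => sub_ne_of_norm_lt (lt_of_le_of_lt (mem_closedBall_zero_iff.mp hξ) hwbn))
    · intro z hz
      apply DifferentiableAt.mul (differentiableAt_const _)
      apply DifferentiableAt.inv (differentiableAt_id.sub (differentiableAt_const _))
      exact sub_ne_of_norm_lt (lt_of_lt_of_le (mem_ball_zero_iff.mp hz.1) hwbn.le)
  have v3 : (∮ ξ in C(0,1), B0c * ((ξ - wa) ^ 2)⁻¹) = 0 := by
    have e : (fun ξ : ℂ => B0c * ((ξ - wa) ^ 2)⁻¹)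
        = fun ξ : ℂ => B0c • (ξ - wa) ^ (-2 : ℤ) := by
      funext ξ
      rw [smul_eq_mul, zpow_neg, zpow_ofNat]
    rw [e, circleIntegral.integral_smul,
      circleIntegral.integral_sub_zpow_of_ne (by decide) 0 wa 1, smul_zero]
  have v4 : (∮ ξ in C(0,1), C0c * ((ξ - wa) ^ 3)⁻¹) = 0 := by
    have e : (fun ξ : ℂ => C0c * ((ξ - wa) ^ 3)⁻¹)
        = fun ξ : ℂ => C0c • (ξ - wa) ^ (-3 : ℤ) := by
      funext ξ
      rw [smul_eq_mul, zpow_neg, zpow_ofNat]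
    rw [e, circleIntegral.integral_smul,
      circleIntegral.integral_sub_zpow_of_ne (by decide) 0 wa 1, smul_zero]
  have pf_int : (∮ ξ in C(0,1), Kf ξ) = A0c * (2 * (π:ℂ) * Complex.I) := by
    have i12 : CircleIntegrable (fun ξ : ℂ => A0c * (ξ - wa)⁻¹ + D0c * (ξ - wb)⁻¹) 0 1 :=
      i1.add i2
    have i34 : CircleIntegrable
        (fun ξ : ℂ => B0c * ((ξ - wa) ^ 2)⁻¹ + C0c * ((ξ - wa) ^ 3)⁻¹) 0 1 := i3.add i4
    rw [circleIntegral.integral_congr zero_le_one pf,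
        circleIntegral_add' i12 i34, circleIntegral_add' i1 i2, circleIntegral_add' i3 i4,
        v1, v2, v3, v4]
    ring
  rw [circleIntegral.integral_congr zero_le_one inner_eq]
  have hsmul := circleIntegral.integral_smul (2 * (π:ℂ) * Complex.I) Kf 0 1
  simp only [smul_eq_mul] at hsmul
  rw [hsmul, pf_int]
  have hpi : (π:ℂ) ≠ 0 := Complex.ofReal_ne_zero.2 Real.pi_ne_zero
  have hIe : (2 * (π:ℂ) * Complex.I) * (A0c * (2 * (π:ℂ) * Complex.I))
      = -(4 * (π:ℂ) ^ 2 * A0c) := by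
    linear_combination (4 * (π:ℂ) ^ 2 * A0c) * Complex.I_sq
  rw [hIe]
  field_simp
  ring

/-- The Gaussian part of the asymptotic variance of `tr(B_n)` in the case `y₂ > 1`:
the iterated limit `r₁ ↓ 1` then `r₂ ↓ 1` of the double contour integral equals
`2 h² y₁² y₂² / (y₁ + y₂)⁴`.  The iterated limit is rendered via an arbitrary
function `L` recording the inner limits. -/
theorem stmt_12 (y1 y2 h : ℝ) (hy1 : 0 < y1) (hy2 : 1 < y2) (hh : 0 < h)
    (hh2 : h ^ 2 = y1 + y2 - y1 * y2) (L : ℝ → ℂ)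
    (hL : ∀ r2 : ℝ, 1 < r2 →
      Filter.Tendsto
        (fun r1 : ℝ =>
          (-(1 / (2 * (π : ℂ) ^ 2))) *
            ∮ ξ2 in C(0, 1),
              (∮ ξ1 in C(0, 1),
                ((ξ1 + 1 / ((h : ℂ) * r1)) * (ξ1 + (h : ℂ) / r1)) /
                    ((ξ1 + (y2 : ℂ) / ((h : ℂ) * r1)) * (ξ1 + (h : ℂ) / ((y2 : ℂ) * r1))) *
                  (((ξ2 + 1 / ((h : ℂ) * r2)) * (ξ2 + (h : ℂ) / r2)) /
                    ((ξ2 + (y2 : ℂ) / ((h : ℂ) * r2)) * (ξ2 + (h : ℂ) / ((y2 : ℂ) * r2)))) *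
                  ((r1 : ℂ) * (r2 : ℂ) / ((r1 : ℂ) * ξ1 - (r2 : ℂ) * ξ2) ^ 2)))
        (𝓝[>] (1 : ℝ)) (𝓝 (L r2))) :
    Filter.Tendsto L (𝓝[>] (1 : ℝ))
      (𝓝 (2 * (h : ℂ) ^ 2 * (y1 : ℂ) ^ 2 * (y2 : ℂ) ^ 2 / ((y1 : ℂ) + (y2 : ℂ)) ^ 4)) := by
  have hsq : h ^ 2 < y2 := by nlinarith
  have hhy2 : h < y2 := by nlinarith
  have hyh1 : 1 < y2 / h := (one_lt_div hh).mpr hhy2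
  set Tv : ℂ := 2 * ((h : ℂ) ^ 2 * ((y2 : ℂ) - (h : ℂ) ^ 2) * ((y2 : ℂ) - 1) *
      (((y2 : ℂ) ^ 2 - (h : ℂ) ^ 2) ^ 2 -
          ((y2 : ℂ) + (h : ℂ) ^ 2 * (y2 : ℂ) - 2 * (h : ℂ) ^ 2) * ((y2 : ℂ) ^ 2 - (h : ℂ) ^ 2) +
        (h : ℂ) ^ 2 * ((y2 : ℂ) - (h : ℂ) ^ 2) * ((y2 : ℂ) - 1)) /
      (((y2 : ℂ) ^ 2 - (h : ℂ) ^ 2) ^ 4)) with hTv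
  have key : ∀ r2 ∈ Ioo (1:ℝ) (y2 / h), L r2 = Tv := by
    intro r2 hr2
    refine tendsto_nhds_unique (hL r2 hr2.1) ?_
    apply Filter.Tendsto.congr' _ (tendsto_const_nhds (x := Tv))
    filter_upwards [Ioo_mem_nhdsGT hr2.1] with r1 hr1
    have hr2y : r2 * h < y2 := (lt_div_iff₀ hh).mp hr2.2
    exact (core12 y2 h r1 r2 hh hy2 hhy2 hr1.1 hr1.2 hr2y).symm
  have ev : (fun _ : ℝ => Tv) =ᶠ[𝓝[>] (1:ℝ)] L := by
    filter_upwards [Ioo_mem_nhdsGT hyh1] with r2 hr2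
    exact (key r2 hr2).symm
  have lim : Filter.Tendsto L (𝓝[>] (1:ℝ)) (𝓝 Tv) :=
    Filter.Tendsto.congr' ev tendsto_const_nhds
  have hcast : ((h : ℂ)) ^ 2 = (y1 : ℂ) + (y2 : ℂ) - (y1 : ℂ) * (y2 : ℂ) := by
    have := congrArg (fun x : ℝ => (x : ℂ)) hh2
    push_cast at this
    exact this
  have d1 : (y2 : ℂ) ^ 2 - ((y1 : ℂ) + (y2 : ℂ) - (y1 : ℂ) * (y2 : ℂ)) ≠ 0 := by
    have h0 : ((y2 ^ 2 - (y1 + y2 - y1 * y2) : ℝ) : ℂ) ≠ 0 :=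
      Complex.ofReal_ne_zero.2 (by nlinarith)
    push_cast at h0
    exact h0
  have d2 : (y1 : ℂ) + (y2 : ℂ) ≠ 0 := by
    have h0 : ((y1 + y2 : ℝ) : ℂ) ≠ 0 := Complex.ofReal_ne_zero.2 (by positivity)
    push_cast at h0
    exact h0
  have Teq : Tv = 2 * (h : ℂ) ^ 2 * (y1 : ℂ) ^ 2 * (y2 : ℂ) ^ 2 / ((y1 : ℂ) + (y2 : ℂ)) ^ 4 := by
    rw [hTv, hcast]
    field_simp
    ring
  rwa [Teq] at lim
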